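/- Let T be a bounded diagonal operator on a separable Hilbert space with diagonal entries λ_n = π(n+1)/(n+α+2) (with respect to an orthonormal basis), where α > -1. Then the numerical range of T is the half-open interval [π/(α+2), π). -/

import Mathlib

/-- Let `T` be a bounded diagonal operator on a separable complex Hilbert space with
diagonal entries `λ_n = π(n+1)/(n+α+2)` with respect to an orthonormal (Hilbert) basis,
where `α > -1`.  Then the numerical range of `T` is `[π/(α+2), π)`. -/
theorem stmt_4 {H : Type*} [NormedAddCommGroup H] [InnerProductSpace ℂ H] [CompleteSpace H]
    (α : ℝ) (hα : -1 < α) (e : HilbertBasis ℕ ℂ H) (T : H →L[ℂ] H)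
    (hT : ∀ n : ℕ, T (e n) = ((Real.pi * (n + 1) / (n + α + 2) : ℝ) : ℂ) • e n) :
    {z : ℂ | ∃ f : H, ‖f‖ = 1 ∧ (inner ℂ f (T f) : ℂ) = z} =
      Complex.ofReal '' Set.Ico (Real.pi / (α + 2)) Real.pi := by
  have hπ := Real.pi_pos
  set lam : ℕ → ℝ := fun n => Real.pi * (n + 1) / (n + α + 2) with hlamdef
  have hTlam : ∀ n : ℕ, T (e n) = ((lam n : ℝ) : ℂ) • e n := hT
  have hden : ∀ n : ℕ, (0:ℝ) < (n : ℝ) + α + 2 := by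
    intro n
    have : (0:ℝ) ≤ (n:ℝ) := Nat.cast_nonneg n
    linarith
  have hlam0 : lam 0 = Real.pi / (α + 2) := by
    simp [hlamdef]
  have hlam0le : ∀ n, lam 0 ≤ lam n := by
    intro n
    rw [hlam0, hlamdef]
    rw [div_le_div_iff₀ (by linarith) (hden n)]
    have hn : (0:ℝ) ≤ (n:ℝ) := Nat.cast_nonneg n
    nlinarith [mul_nonneg (mul_nonneg hπ.le hn) (by linarith : (0:ℝ) ≤ α + 1)]
  have hlamlt : ∀ n, lam n < Real.pi := by
    intro n
    rw [hlamdef, div_lt_iff₀ (hden n)]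
    have hn : (0:ℝ) ≤ (n:ℝ) := Nat.cast_nonneg n
    nlinarith
  have hortho := e.orthonormal
  have hite := orthonormal_iff_ite.mp hortho
  -- key: inner (e i) (T f) = lam i * inner (e i) f
  have hcoeff : ∀ (f : H) (i : ℕ), (inner ℂ (e i) (T f) : ℂ) = (lam i : ℂ) * (inner ℂ (e i) f : ℂ) := by
    intro f i
    have h1 : HasSum (fun n => T (e.repr f n • e n)) (T f) := (e.hasSum_repr f).mapL T
    have h2 : HasSum (fun n => (inner ℂ (e i) (T (e.repr f n • e n)) : ℂ)) (inner ℂ (e i) (T f) : ℂ) :=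
      h1.mapL (innerSL ℂ (e i))
    have h3 : ∀ n, (inner ℂ (e i) (T (e.repr f n • e n)) : ℂ)
        = if n = i then (lam i : ℂ) * (inner ℂ (e i) f : ℂ) else 0 := by
      intro n
      rw [map_smul, hTlam n, inner_smul_right, inner_smul_right, hite]
      rcases eq_or_ne n i with rfl | hni
      · rw [e.repr_apply_apply]
        simp [mul_comm]
      · simp [hni, Ne.symm hni]
    simp_rw [h3] at h2
    exact h2.unique (hasSum_ite_eq i _)
  ext z
  simp only [Set.mem_setOf_eq, Set.mem_image, Set.mem_Ico]
  constructor
  · rintro ⟨f, hf, rfl⟩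
    -- coefficients
    set p : ℕ → ℝ := fun i => ‖(inner ℂ (e i) f : ℂ)‖^2 with hpdef
    have hpnonneg : ∀ i, 0 ≤ p i := fun i => sq_nonneg _
    have hp1 : HasSum p 1 := by
      have h := e.hasSum_inner_mul_inner f f
      have h2 : ∀ i, (inner ℂ f (e i) : ℂ) * (inner ℂ (e i) f : ℂ) = ((p i : ℝ) : ℂ) := by
        intro i
        have h3 : (inner ℂ f (e i) : ℂ) = starRingEnd ℂ (inner ℂ (e i) f : ℂ) :=
          (inner_conj_symm _ _).symm
        rw [h3, mul_comm, RCLike.mul_conj]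
        norm_cast
      simp_rw [h2] at h
      rw [inner_self_eq_norm_sq_to_K, hf] at h
      have h' : HasSum (fun i => ((p i : ℝ):ℂ)) ((1:ℝ):ℂ) := by
        simpa using h
      exact Complex.hasSum_ofReal.mp h'
    have hS : HasSum (fun i => ((lam i * p i : ℝ) : ℂ)) (inner ℂ f (T f) : ℂ) := by
      have h := e.hasSum_inner_mul_inner f (T f)
      have h2 : ∀ i, (inner ℂ f (e i) : ℂ) * (inner ℂ (e i) (T f) : ℂ) = ((lam i * p i : ℝ) : ℂ) := by
        intro i
        rw [hcoeff f i]
        have h3 : (inner ℂ f (e i) : ℂ) = starRingEnd ℂ (inner ℂ (e i) f : ℂ) :=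
          (inner_conj_symm _ _).symm
        rw [h3]
        rw [show starRingEnd ℂ (inner ℂ (e i) f : ℂ) * ((lam i : ℂ) * (inner ℂ (e i) f : ℂ))
            = (lam i : ℂ) * ((inner ℂ (e i) f : ℂ) * starRingEnd ℂ (inner ℂ (e i) f : ℂ)) by ring,
          RCLike.mul_conj]
        simp only [hpdef, Complex.ofReal_mul, Complex.ofReal_pow]
        rfl
      simp_rw [h2] at h
      exact h
    -- real value
    set r : ℝ := (inner ℂ f (T f) : ℂ).re with hrdef
    have hSr : HasSum (fun i => lam i * p i) r := by
      have := hS.mapL Complex.reCLM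
      simpa using this
    have hzr : (inner ℂ f (T f) : ℂ) = (r : ℂ) :=
      hS.unique (Complex.hasSum_ofReal.mpr hSr)
    refine ⟨r, ⟨?_, ?_⟩, hzr.symm⟩
    · -- lower bound
      rw [← hlam0]
      have hle : lam 0 * 1 ≤ r := by
        refine hasSum_le (fun i => ?_) (hp1.mul_left (lam 0)) hSr
        exact mul_le_mul_of_nonneg_right (hlam0le i) (hpnonneg i)
      linarith
    · -- strict upper bound
      obtain ⟨i0, hi0⟩ : ∃ i, p i ≠ 0 := by
        by_contra hc
        push_neg at hc
        have : HasSum p 0 := by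
          convert hasSum_zero with i
          exact hc i
        exact one_ne_zero (hp1.unique this)
      have hi0pos : 0 < p i0 := lt_of_le_of_ne (hpnonneg i0) (Ne.symm hi0)
      have hlt : r < Real.pi * 1 := by
        refine hasSum_lt (i := i0) (fun i => ?_) ?_ hSr (hp1.mul_left Real.pi)
        · exact mul_le_mul_of_nonneg_right (hlamlt i).le (hpnonneg i)
        · exact mul_lt_mul_of_pos_right (hlamlt i0) hi0pos
      linarith
  · rintro ⟨t, ⟨ht0, htpi⟩, rfl⟩
    rw [← hlam0] at ht0
    -- find n with t < lam n
    obtain ⟨n, hn⟩ := exists_nat_gt ((t * (α + 2) - Real.pi) / (Real.pi - t))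
    have htn : t < lam n := by
      rw [hlamdef, lt_div_iff₀ (hden n)]
      have h1 : (t * (α + 2) - Real.pi) < n * (Real.pi - t) :=
        (div_lt_iff₀ (by linarith)).mp hn
      nlinarith
    have h0n : lam 0 < lam n := lt_of_le_of_lt ht0 htn
    have hn0 : n ≠ 0 := by
      intro h
      rw [h] at h0n
      exact lt_irrefl _ h0n
    set s2 : ℝ := (t - lam 0) / (lam n - lam 0) with hs2def
    have hs2nonneg : 0 ≤ s2 := div_nonneg (by linarith) (by linarith)
    have hs2le : s2 ≤ 1 := by
      rw [hs2def, div_le_one (by linarith)]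
      linarith
    set a : ℝ := Real.sqrt (1 - s2) with hadef
    set b : ℝ := Real.sqrt s2 with hbdef
    have ha2 : a ^ 2 = 1 - s2 := Real.sq_sqrt (by linarith)
    have hb2 : b ^ 2 = s2 := Real.sq_sqrt hs2nonneg
    set f : H := (a : ℂ) • e 0 + (b : ℂ) • e n with hfdef
    have hinner_ff : (inner ℂ f f : ℂ) = ((a^2 + b^2 : ℝ) : ℂ) := by
      rw [hfdef]
      simp only [inner_add_left, inner_add_right, inner_smul_left, inner_smul_right, hite,
        Complex.conj_ofReal]
      simp [hn0, Ne.symm hn0]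
      ring
    have hnormf : ‖f‖ = 1 := by
      have h1 : (inner ℂ f f : ℂ) = ((‖f‖:ℂ)) ^ 2 := inner_self_eq_norm_sq_to_K f
      rw [hinner_ff] at h1
      have h2 : a^2 + b^2 = ‖f‖^2 := by
        have := h1
        push_cast at this
        exact_mod_cast this
      have h3 : ‖f‖^2 = 1 := by rw [← h2, ha2, hb2]; ring
      nlinarith [norm_nonneg f]
    refine ⟨f, hnormf, ?_⟩
    have hTf : T f = (a : ℂ) • ((lam 0 : ℝ) : ℂ) • e 0 + (b : ℂ) • ((lam n : ℝ) : ℂ) • e n := by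
      rw [hfdef, map_add, map_smul, map_smul, hTlam 0, hTlam n]
    have hval : (inner ℂ f (T f) : ℂ) = ((a^2 * lam 0 + b^2 * lam n : ℝ) : ℂ) := by
      rw [hTf, hfdef]
      simp only [inner_add_left, inner_add_right, inner_smul_left, inner_smul_right, hite,
        Complex.conj_ofReal]
      simp [hn0, Ne.symm hn0]
      ring
    rw [hval]
    congr 1
    rw [ha2, hb2]
    have hkey : s2 * (lam n - lam 0) = t - lam 0 := by
      rw [hs2def]
      exact div_mul_cancel₀ _ (sub_ne_zero.mpr (ne_of_gt h0n))
    linear_combination hkey
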